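/- For every real number t with 0 < t < 1/2, the series Σ_{n=0}^∞ f(0,n)·tⁿ converges and its sum equals (1 − √(1 − 4t²))/(2t²). -/

import Mathlib

/-- The number of walks of length `n` on the nonnegative integers starting at `0`,
ending at `i`, with steps `+1` or `-1`. -/
noncomputable def walkCount (i n : ℕ) : ℕ :=
  Nat.card {w : Fin (n + 1) → ℕ //
    w 0 = 0 ∧ w (Fin.last n) = i ∧
    ∀ k : Fin n, ((w k.succ : ℤ) - (w k.castSucc : ℤ)).natAbs = 1}

open Finset

lemma tri_le_sq {f : ℕ → ℝ} (hf : ∀ i, 0 ≤ f i) (N : ℕ) :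
    ∑ m ∈ range N, ∑ i ∈ range (m + 1), f i * f (m - i) ≤ (∑ i ∈ range N, f i) ^ 2 := by
  rw [sq, Finset.sum_mul_sum, ← Finset.sum_product']
  have h1 : ∑ m ∈ range N, ∑ i ∈ range (m + 1), f i * f (m - i)
      = ∑ p ∈ ((range N) ×ˢ (range N)).filter (fun p : ℕ × ℕ => p.1 + p.2 < N),
          f p.1 * f p.2 := by
    rw [Finset.sum_sigma']
    refine Finset.sum_bij' (fun p _ => (p.2, p.1 - p.2)) (fun p _ => ⟨p.1 + p.2, p.1⟩)
      ?_ ?_ ?_ ?_ ?_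
    · rintro ⟨m, i⟩ h
      simp only [mem_sigma, mem_range] at h
      simp only [mem_filter, mem_product, mem_range]
      omega
    · rintro ⟨a, b⟩ h
      simp only [mem_filter, mem_product, mem_range] at h
      simp only [mem_sigma, mem_range]
      omega
    · rintro ⟨m, i⟩ h
      simp only [mem_sigma, mem_range] at h
      simp only [Sigma.mk.inj_iff]
      constructor <;> [omega; rfl]
    · rintro ⟨a, b⟩ h
      show (a, a + b - a) = (a, b)
      rw [Nat.add_sub_cancel_left]
    · rintro ⟨m, i⟩ h; rfl
  rw [h1]
  refine Finset.sum_le_sum_of_subset_of_nonneg (Finset.filter_subset _ _) ?_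
  intro p _ _
  exact mul_nonneg (hf _) (hf _)

lemma catalan_hasSum {x : ℝ} (hx0 : 0 < x) (hx1 : x < 1 / 4) :
    HasSum (fun m : ℕ => (catalan m : ℝ) * x ^ m)
      ((1 - Real.sqrt (1 - 4 * x)) / (2 * x)) := by
  set r := Real.sqrt (1 - 4 * x) with hr
  have h4x : 0 < 1 - 4 * x := by linarith
  have hr2 : r ^ 2 = 1 - 4 * x := Real.sq_sqrt h4x.le
  have hrpos : 0 < r := Real.sqrt_pos.mpr h4x
  have hr1 : r < 1 := by nlinarith
  set g := (1 - r) / (2 * x) with hg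
  have hg0 : 0 ≤ g := div_nonneg (by linarith) (by linarith)
  have hkey : 1 + x * g ^ 2 = g := by
    rw [hg]; field_simp; nlinarith
  set f : ℕ → ℝ := fun m => (catalan m : ℝ) * x ^ m with hf
  have hfnn : ∀ m, 0 ≤ f m := fun m => by positivity
  have hf0 : f 0 = 1 := by simp [hf]
  have hfsucc : ∀ m : ℕ, f (m + 1) = x * ∑ i ∈ range (m + 1), f i * f (m - i) := by
    intro m
    rw [hf]
    simp only [catalan_succ',
      Nat.sum_antidiagonal_eq_sum_range_succ (fun a b => catalan a * catalan b) m,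
      Nat.cast_sum, Nat.cast_mul, Finset.sum_mul, Finset.mul_sum]
    refine Finset.sum_congr rfl fun i hi => ?_
    rw [mem_range] at hi
    have hm : m + 1 = i + (m - i) + 1 := by omega
    rw [hm, pow_add, pow_add, pow_one]
    ring
  have hP : ∀ N, ∑ i ∈ range N, f i ≤ g := by
    intro N
    induction N with
    | zero => simpa using hg0
    | succ N ih =>
      have hPnn : 0 ≤ ∑ i ∈ range N, f i := Finset.sum_nonneg fun i _ => hfnn i
      rw [Finset.sum_range_succ']
      have hsqle : (∑ i ∈ range N, f i) ^ 2 ≤ g ^ 2 := by nlinarith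
      calc ∑ i ∈ range N, f (i + 1) + f 0
          = 1 + x * ∑ m ∈ range N, ∑ i ∈ range (m + 1), f i * f (m - i) := by
            rw [hf0, Finset.mul_sum]
            simp only [hfsucc]
            ring
        _ ≤ 1 + x * (∑ i ∈ range N, f i) ^ 2 := by
            have := tri_le_sq hfnn N
            nlinarith
        _ ≤ 1 + x * g ^ 2 := by nlinarith
        _ = g := hkey
  have hsum : Summable f := summable_of_sum_range_le hfnn hP
  have hSle : ∑' m, f m ≤ g := Summable.tsum_le_of_sum_range_le hsum hP
  set S := ∑' m, f m with hS
  have hS0 : 0 ≤ S := tsum_nonneg hfnn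
  have hnorm : Summable fun m => ‖f m‖ := by
    simpa [Real.norm_eq_abs, abs_of_nonneg (hfnn _)] using hsum
  have hcauchy : S * S = ∑' m, ((catalan (m + 1) : ℝ) * x ^ m) := by
    rw [hS, tsum_mul_tsum_eq_tsum_sum_antidiagonal_of_summable_norm hnorm hnorm]
    refine tsum_congr fun m => ?_
    rw [catalan_succ', Nat.cast_sum, Finset.sum_mul]
    refine Finset.sum_congr rfl fun p hp => ?_
    rw [Finset.HasAntidiagonal.mem_antidiagonal] at hp
    rw [hf]
    push_cast
    rw [← hp, pow_add]
    ring
  have heq : S = 1 + x * (S * S) := by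
    have h1 : S = f 0 + ∑' m, f (m + 1) := Summable.tsum_eq_zero_add hsum
    have h2 : ∑' m, f (m + 1) = x * ∑' m, ((catalan (m + 1) : ℝ) * x ^ m) := by
      rw [← tsum_mul_left]
      refine tsum_congr fun m => ?_
      rw [hf]; push_cast; ring
    rw [hcauchy]
    rw [h2, hf0] at h1
    exact h1
  have hSg : S = g := by
    by_contra hne
    have h1 : S - g = (x * (S + g)) * (S - g) := by linear_combination heq + hkey
    have hsg : S - g ≠ 0 := sub_ne_zero.mpr hne
    have h2 : (1 : ℝ) = x * (S + g) :=
      mul_right_cancel₀ hsg (by linear_combination h1)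
    have h3 : x * (S + g) ≤ x * (2 * g) := by nlinarith
    have hxg : x * (2 * g) = 1 - r := by
      rw [hg]; field_simp
    linarith
  have : HasSum f S := hsum.hasSum
  rwa [hSg] at this

open List DyckStep
open List DyckStep

lemma cUU : List.count U [U] = 1 := by decide
lemma cDU : List.count D [U] = 0 := by decide
lemma cUD : List.count U [D] = 0 := by decide
lemma cDD : List.count D [D] = 1 := by decide

lemma count_U_add_count_D (l : List DyckStep) : l.count U + l.count D = l.length := by
  induction l with
  | nil => simp
  | cons a t ih => cases a <;> simp [List.count_cons] <;> omega

/-- The step list of a walk. -/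
def walkList (n : ℕ) (w : Fin (n + 1) → ℕ) : List DyckStep :=
  List.ofFn fun k : Fin n => if w k.castSucc < w k.succ then U else D

lemma walkList_length (n : ℕ) (w : Fin (n + 1) → ℕ) : (walkList n w).length = n := by
  simp [walkList]

lemma walkList_getElem (n : ℕ) (w : Fin (n + 1) → ℕ) (k : ℕ) (hk : k < n) :
    (walkList n w)[k]'(by simp [walkList_length, hk]) =
      if w (Fin.castSucc ⟨k, hk⟩) < w (Fin.succ ⟨k, hk⟩) then U else D := by
  simp [walkList]

lemma walk_count_eq (n : ℕ) (w : Fin (n + 1) → ℕ) (h0 : w 0 = 0)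
    (hstep : ∀ k : Fin n, ((w k.succ : ℤ) - (w k.castSucc : ℤ)).natAbs = 1)
    (k : ℕ) (hk : k ≤ n) :
    ((((walkList n w).take k).count U : ℤ) - (((walkList n w).take k).count D : ℤ)
      = w ⟨k, Nat.lt_succ_of_le hk⟩)
    ∧ ((walkList n w).take k).count D ≤ ((walkList n w).take k).count U := by
  induction k with
  | zero =>
    have h00 : (⟨0, Nat.lt_succ_of_le hk⟩ : Fin (n + 1)) = 0 := rfl
    rw [h00, h0]
    simp
  | succ k ih =>
    have hk' : k < n := hk
    obtain ⟨ih1, ih2⟩ := ih hk'.le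
    have htake : (walkList n w).take (k + 1)
        = (walkList n w).take k ++ [(walkList n w)[k]'(by simp [walkList_length, hk'])] := by
      rw [List.take_succ, List.getElem?_eq_getElem (by simp [walkList_length, hk'])]
      simp
    have hs := hstep ⟨k, hk'⟩
    have hcs : (⟨k, hk'⟩ : Fin n).castSucc = ⟨k, Nat.lt_succ_of_le hk'.le⟩ := rfl
    have hsc : (⟨k, hk'⟩ : Fin n).succ = ⟨k + 1, Nat.lt_succ_of_le hk⟩ := rfl
    rw [hcs, hsc] at hs
    rw [walkList_getElem n w k hk', hcs, hsc] at htake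
    by_cases hlt : w ⟨k, Nat.lt_succ_of_le hk'.le⟩ < w ⟨k + 1, Nat.lt_succ_of_le hk⟩
    · rw [if_pos hlt] at htake
      rw [htake]
      simp only [List.count_append, cUU, cDU]
      constructor
      · push_cast at ih1 ⊢
        omega
      · omega
    · rw [if_neg hlt] at htake
      rw [htake]
      simp only [List.count_append, cUD, cDD]
      constructor
      · push_cast at ih1 ⊢
        omega
      · push_cast at ih1 ⊢
        omega

/-- Walks of length `n` from 0 to 0 are equivalent to Dyck words of length `n`. -/
noncomputable def walkEquiv (n : ℕ) :
    {w : Fin (n + 1) → ℕ //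
      w 0 = 0 ∧ w (Fin.last n) = 0 ∧
      ∀ k : Fin n, ((w k.succ : ℤ) - (w k.castSucc : ℤ)).natAbs = 1} ≃
    {p : DyckWord // p.toList.length = n} where
  toFun := fun ⟨w, h0, hl, hstep⟩ => by
    refine ⟨⟨walkList n w, ?_, ?_⟩, walkList_length n w⟩
    · have := walk_count_eq n w h0 hstep n le_rfl
      rw [List.take_of_length_le (by simp [walkList_length])] at this
      have hl' : w ⟨n, Nat.lt_succ_of_le le_rfl⟩ = 0 := hl
      omega
    · intro i
      by_cases hi : i ≤ n
      · exact (walk_count_eq n w h0 hstep i hi).2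
      · rw [List.take_of_length_le (by simp [walkList_length]; omega)]
        have := walk_count_eq n w h0 hstep n le_rfl
        rw [List.take_of_length_le (by simp [walkList_length])] at this
        exact this.2
  invFun := fun ⟨p, hp⟩ => by
    refine ⟨fun k => (p.toList.take k).count U - (p.toList.take k).count D, by simp, ?_, ?_⟩
    · show (p.toList.take n).count U - (p.toList.take n).count D = 0
      rw [List.take_of_length_le (le_of_eq hp), p.count_U_eq_count_D]
      omega
    · intro k
      have hk : (k : ℕ) < p.toList.length := by rw [hp]; exact k.isLt
      have htake : p.toList.take ((k : ℕ) + 1)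
          = p.toList.take k ++ [p.toList[(k : ℕ)]'hk] := by
        rw [List.take_succ, List.getElem?_eq_getElem hk]
        simp
      have hcs : ((k.castSucc : Fin (n + 1)) : ℕ) = (k : ℕ) := rfl
      have hsc : ((k.succ : Fin (n + 1)) : ℕ) = (k : ℕ) + 1 := rfl
      have hlek := p.count_D_le_count_U (k : ℕ)
      have hlek1 := p.count_D_le_count_U ((k : ℕ) + 1)
      rcases DyckStep.dichotomy (p.toList[(k : ℕ)]'hk) with hel | hel <;>
        rw [hel] at htake <;>
        simp only [hcs, hsc, htake, List.count_append, cUU, cDU, cUD, cDD] at hlek1 ⊢ <;>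
        omega
  left_inv := by
    rintro ⟨w, h0, hl, hstep⟩
    apply Subtype.ext
    funext k
    show ((walkList n w).take (k : ℕ)).count U - ((walkList n w).take (k : ℕ)).count D = w k
    have hk : (k : ℕ) ≤ n := Nat.lt_succ_iff.mp k.isLt
    obtain ⟨h1, h2⟩ := walk_count_eq n w h0 hstep (k : ℕ) hk
    rw [Fin.eta] at h1
    omega
  right_inv := by
    rintro ⟨p, hp⟩
    apply Subtype.ext
    apply DyckWord.ext
    show walkList n (fun k : Fin (n + 1) =>
      (p.toList.take (k : ℕ)).count U - (p.toList.take (k : ℕ)).count D) = p.toList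
    apply List.ext_getElem (by simp [walkList_length, hp])
    intro i h1 h2
    rw [walkList_getElem n _ i (by simpa [walkList_length] using h1)]
    have hi : i < p.toList.length := h2
    have htake : p.toList.take (i + 1) = p.toList.take i ++ [p.toList[i]'hi] := by
      rw [List.take_succ, List.getElem?_eq_getElem hi]
      simp
    have hlek := p.count_D_le_count_U i
    have hlek1 := p.count_D_le_count_U (i + 1)
    rcases DyckStep.dichotomy (p.toList[i]'hi) with hel | hel
    · have hcond : (p.toList.take i).count U - (p.toList.take i).count D
          < (p.toList.take (i + 1)).count U - (p.toList.take (i + 1)).count D := by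
        simp only [htake, hel, List.count_append, cUU, cDU] at hlek1 ⊢
        omega
      rw [hel]
      exact if_pos hcond
    · have hcond : ¬ ((p.toList.take i).count U - (p.toList.take i).count D
          < (p.toList.take (i + 1)).count U - (p.toList.take (i + 1)).count D) := by
        simp only [htake, hel, List.count_append, cUD, cDD] at hlek1 ⊢
        omega
      rw [hel]
      exact if_neg hcond

lemma walkCount_even (m : ℕ) : walkCount 0 (2 * m) = catalan m := by
  rw [walkCount, Nat.card_congr ((walkEquiv (2 * m)).trans
    (Equiv.subtypeEquivRight (q := fun p : DyckWord => p.semilength = m) (fun p => by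
      have := p.two_mul_semilength_eq_length
      constructor <;> intro h <;> omega))), Nat.card_eq_fintype_card]
  exact DyckWord.card_dyckWord_semilength_eq_catalan m

lemma walkCount_odd (n : ℕ) (hn : ¬ Even n) : walkCount 0 n = 0 := by
  rw [walkCount, Nat.card_congr (walkEquiv n)]
  have : IsEmpty {p : DyckWord // p.toList.length = n} := by
    refine ⟨fun ⟨p, hp⟩ => ?_⟩
    have := p.two_mul_semilength_eq_length
    exact hn ⟨p.semilength, by omega⟩
  exact Nat.card_of_isEmpty

theorem excursion_series_sum (t : ℝ) (ht0 : 0 < t) (ht1 : t < 1 / 2) :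
    HasSum (fun n : ℕ => (walkCount 0 n : ℝ) * t ^ n)
      ((1 - Real.sqrt (1 - 4 * t ^ 2)) / (2 * t ^ 2)) := by
  have hx0 : 0 < t ^ 2 := by positivity
  have hx1 : t ^ 2 < 1 / 4 := by nlinarith
  have hinj : Function.Injective (fun m : ℕ => 2 * m) :=
    mul_right_injective₀ two_ne_zero
  refine (Function.Injective.hasSum_iff hinj ?_).mp ?_
  · intro n hn
    have hodd : ¬ Even n := by
      intro ⟨r, hr⟩
      exact hn ⟨r, by show 2 * r = n; omega⟩
    simp [walkCount_odd n hodd]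
  · have h := catalan_hasSum hx0 hx1
    have heq : (fun m : ℕ => (catalan m : ℝ) * (t ^ 2) ^ m)
        = (fun n : ℕ => (walkCount 0 n : ℝ) * t ^ n) ∘ (fun m : ℕ => 2 * m) := by
      funext m
      simp [Function.comp, walkCount_even, pow_mul]
    rw [heq] at h
    convert h using 2
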